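/- For every tetrahedral erasure channel W, the inertia decreases on average: A(W^s) + A(W^p) ≤ A(W). -/
import Mathlib

noncomputable section

/-- A quintuple of reals representing a candidate tetrahedral erasure channel
`W = (p, q, r, s, t)`. -/
structure TECQuint where
  p : ℝ
  q : ℝ
  r : ℝ
  s : ℝ
  t : ℝ

namespace TECQuint

/-- `W` is a tetrahedral erasure channel: all five entries are nonnegative and sum to 1. -/
def IsTEC (W : TECQuint) : Prop :=
  0 ≤ W.p ∧ 0 ≤ W.q ∧ 0 ≤ W.r ∧ 0 ≤ W.s ∧ 0 ≤ W.t ∧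
    W.p + W.q + W.r + W.s + W.t = 1

/-- `W` is balanced: `q = r = s`. -/
def Balanced (W : TECQuint) : Prop := W.q = W.r ∧ W.r = W.s

/-- The serial child `W^s`. -/
def ser (W : TECQuint) : TECQuint where
  p := W.p ^ 2
  q := W.p * W.s + W.s * W.q + W.q * W.p
  r := W.p * W.q + W.q * W.r + W.r * W.p
  s := W.p * W.r + W.r * W.s + W.s * W.p
  t := 1 - (W.p ^ 2 + (W.p * W.s + W.s * W.q + W.q * W.p)
      + (W.p * W.q + W.q * W.r + W.r * W.p)
      + (W.p * W.r + W.r * W.s + W.s * W.p))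

/-- The parallel child `W^p`. -/
def par (W : TECQuint) : TECQuint where
  p := 1 - ((W.t * W.s + W.s * W.q + W.q * W.t)
      + (W.t * W.q + W.q * W.r + W.r * W.t)
      + (W.t * W.r + W.r * W.s + W.s * W.t) + W.t ^ 2)
  q := W.t * W.s + W.s * W.q + W.q * W.t
  r := W.t * W.q + W.q * W.r + W.r * W.t
  s := W.t * W.r + W.r * W.s + W.s * W.t
  t := W.t ^ 2

/-- The moment of inertia `A(W) = (q−r)² + (r−s)² + (s−q)²`. -/
def inertia (W : TECQuint) : ℝ :=
  (W.q - W.r) ^ 2 + (W.r - W.s) ^ 2 + (W.s - W.q) ^ 2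

/-- The (conditional) entropy `H(W) = (q+r+s)/2 + t`. -/
def entropy (W : TECQuint) : ℝ := (W.q + W.r + W.s) / 2 + W.t

/-- The edge mass `E(W) = q + r + s`. -/
def edgeMass (W : TECQuint) : ℝ := W.q + W.r + W.s

/-- The Quetelet index `Q(W) = E(W) / (H(W)(1−H(W)))`. -/
def quetelet (W : TECQuint) : ℝ :=
  edgeMass W / (entropy W * (1 - entropy W))

/-- One step of the channel process: `true` picks the serial child, `false` the parallel child. -/
def child (W : TECQuint) (b : Bool) : TECQuint := if b then ser W else par W

/-- The descendant `W^c` of `W` along the string `c ∈ {s,p}^n`. -/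
def descend : TECQuint → {n : ℕ} → (Fin n → Bool) → TECQuint
  | W, 0, _ => W
  | W, _ + 1, c => descend (child W (c 0)) (fun i => c i.succ)

end TECQuint

open TECQuint

lemma schur (q r s : ℝ) (hq : 0 ≤ q) (hr : 0 ≤ r) (hs : 0 ≤ s) :
    0 ≤ q * (q - r) * (q - s) + r * (r - q) * (r - s) + s * (s - q) * (s - r) := by
  rcases le_total q r with h1 | h1 <;> rcases le_total r s with h2 | h2 <;>
    rcases le_total q s with h3 | h3 <;>
    nlinarith [mul_nonneg hq hr, mul_nonneg hr hs, mul_nonneg hq hs,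
      sq_nonneg (q - r), sq_nonneg (r - s), sq_nonneg (q - s)]

set_option maxHeartbeats 1000000 in
lemma f_nonpos (q r s : ℝ) (hq : 0 ≤ q) (hr : 0 ≤ r) (hs : 0 ≤ s) :
    (q - r - s) * (s - r) ^ 2 + (r - q - s) * (q - s) ^ 2 + (s - q - r) * (r - q) ^ 2 ≤ 0 := by
  have := schur q r s hq hr hs
  nlinarith [this]

set_option maxHeartbeats 1000000 in
theorem average_loss_of_inertia (W : TECQuint) (hW : W.IsTEC) :
    inertia (ser W) + inertia (par W) ≤ inertia W := by
  obtain ⟨p, q, r, s, t⟩ := W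
  obtain ⟨hp, hq, hr, hs, ht, hsum⟩ := hW
  simp only at hp hq hr hs ht hsum
  have h1 : inertia (ser ⟨p, q, r, s, t⟩) =
      (p + q) ^ 2 * (s - r) ^ 2 + (p + r) ^ 2 * (q - s) ^ 2 + (p + s) ^ 2 * (r - q) ^ 2 := by
    simp only [inertia, ser]; ring
  have h2 : inertia (par ⟨p, q, r, s, t⟩) =
      (t + q) ^ 2 * (s - r) ^ 2 + (t + r) ^ 2 * (q - s) ^ 2 + (t + s) ^ 2 * (r - q) ^ 2 := by
    simp only [inertia, par]; ring
  have hf := f_nonpos q r s hq hr hs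
  have b1 : (p + q) ^ 2 ≤ p + q := by nlinarith
  have b2 : (p + r) ^ 2 ≤ p + r := by nlinarith
  have b3 : (p + s) ^ 2 ≤ p + s := by nlinarith
  have b4 : (t + q) ^ 2 ≤ t + q := by nlinarith
  have b5 : (t + r) ^ 2 ≤ t + r := by nlinarith
  have b6 : (t + s) ^ 2 ≤ t + s := by nlinarith
  have e : (p + q) * (s - r) ^ 2 + (p + r) * (q - s) ^ 2 + (p + s) * (r - q) ^ 2
      + ((t + q) * (s - r) ^ 2 + (t + r) * (q - s) ^ 2 + (t + s) * (r - q) ^ 2)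
      = ((q - r) ^ 2 + (r - s) ^ 2 + (s - q) ^ 2)
        + ((q - r - s) * (s - r) ^ 2 + (r - q - s) * (q - s) ^ 2 + (s - q - r) * (r - q) ^ 2) := by
    linear_combination ((s - r) ^ 2 + (q - s) ^ 2 + (r - q) ^ 2) * hsum
  rw [h1, h2]
  simp only [inertia]
  have m1 := mul_le_mul_of_nonneg_right b1 (sq_nonneg (s - r))
  have m2 := mul_le_mul_of_nonneg_right b2 (sq_nonneg (q - s))
  have m3 := mul_le_mul_of_nonneg_right b3 (sq_nonneg (r - q))
  have m4 := mul_le_mul_of_nonneg_right b4 (sq_nonneg (s - r))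
  have m5 := mul_le_mul_of_nonneg_right b5 (sq_nonneg (q - s))
  have m6 := mul_le_mul_of_nonneg_right b6 (sq_nonneg (r - q))
  linarith
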